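/- Let τ > 0, let f : ℝ → ℝ and h : ℝ×ℝ → ℝ, and let y₀ : ℝ → ℝ be differentiable with y₀'(t) = h(x₀(t), y₀(t)), where x₀(t) = τ·f(y₀(t)) is the standard quasi-steady state approximation. Assume f is differentiable and that the function w(t) = f'(y₀(t))·h(x₀(t), y₀(t)) is differentiable. Define the first-order correction x̂(t) = x₀(t) - τ²·f'(y₀(t))·h(x₀(t), y₀(t)). Then x̂ satisfies the first equation of the fast-slow system exactly up to a remainder quadratic in τ: for all t, d x̂/dt(t) = f(y₀(t)) - (1/τ)·x̂(t) - τ²·w'(t). -/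

import Mathlib

/-- The first-order correction `x̂(t) = x₀(t) - τ²·f'(y₀(t))·h(x₀(t), y₀(t))` of the
standard QSSA `x₀(t) = τ·f(y₀(t))`, where `dy₀/dt = h(x₀(t), y₀(t))`, satisfies the
fast equation `dx/dt = f(y) - (1/τ)x` of the fast-slow system up to a remainder
quadratic in `τ`: `d x̂/dt(t) = f(y₀(t)) - (1/τ)·x̂(t) - τ²·w'(t)`, where
`w(t) = f'(y₀(t))·h(x₀(t), y₀(t))`. -/
theorem dqssa_first_order_correction_satisfies_fast_equation
    (τ : ℝ) (hτ : 0 < τ) (f f' : ℝ → ℝ) (h : ℝ → ℝ → ℝ) (y₀ w' : ℝ → ℝ)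
    (hf : ∀ y, HasDerivAt f (f' y) y)
    (hy₀ : ∀ t, HasDerivAt y₀ (h (τ * f (y₀ t)) (y₀ t)) t)
    (hw : ∀ t, HasDerivAt (fun s => f' (y₀ s) * h (τ * f (y₀ s)) (y₀ s)) (w' t) t) :
    ∀ t, HasDerivAt
      (fun s => τ * f (y₀ s) - τ ^ 2 * (f' (y₀ s) * h (τ * f (y₀ s)) (y₀ s)))
      (f (y₀ t)
        - (1 / τ) * (τ * f (y₀ t) - τ ^ 2 * (f' (y₀ t) * h (τ * f (y₀ t)) (y₀ t)))
        - τ ^ 2 * w' t) t := by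
  intro t
  have h1 : HasDerivAt (fun s => f (y₀ s)) (f' (y₀ t) * h (τ * f (y₀ t)) (y₀ t)) t :=
    (hf (y₀ t)).comp t (hy₀ t)
  have h2 := (h1.const_mul τ).sub ((hw t).const_mul (τ ^ 2))
  refine h2.congr_deriv ?_
  field_simp
  ring
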